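/- Let e ≥ 1 be an integer and let k be a positive integer with gcd(k, 4·3^{e−1}) = 1. Then D_k(u, 1) = u for all u ∈ ℤ/3^eℤ if and only if k ≡ 1 or k ≡ −1 (mod 4·3^{e−1}). -/

import Mathlib

open Polynomial

/-! ## Auxiliary quadratic ring `Quad n u = (ZMod n)[t]/(t² - u t + 1)` -/

@[ext]
structure Quad (n : ℕ) (u : ZMod n) where
  a : ZMod n
  b : ZMod n

namespace Quad

variable {n : ℕ} {u : ZMod n}

instance : Zero (Quad n u) := ⟨⟨0, 0⟩⟩
instance : One (Quad n u) := ⟨⟨1, 0⟩⟩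
instance : Add (Quad n u) := ⟨fun x y => ⟨x.a + y.a, x.b + y.b⟩⟩
instance : Neg (Quad n u) := ⟨fun x => ⟨-x.a, -x.b⟩⟩
instance : Mul (Quad n u) :=
  ⟨fun x y => ⟨x.a * y.a - x.b * y.b, x.a * y.b + x.b * y.a + u * x.b * y.b⟩⟩

@[simp] lemma zero_a : (0 : Quad n u).a = 0 := rfl
@[simp] lemma zero_b : (0 : Quad n u).b = 0 := rfl
@[simp] lemma one_a : (1 : Quad n u).a = 1 := rfl
@[simp] lemma one_b : (1 : Quad n u).b = 0 := rfl
@[simp] lemma add_a (x y : Quad n u) : (x + y).a = x.a + y.a := rfl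
@[simp] lemma add_b (x y : Quad n u) : (x + y).b = x.b + y.b := rfl
@[simp] lemma neg_a (x : Quad n u) : (-x).a = -x.a := rfl
@[simp] lemma neg_b (x : Quad n u) : (-x).b = -x.b := rfl
@[simp] lemma mul_a (x y : Quad n u) : (x * y).a = x.a * y.a - x.b * y.b := rfl
@[simp] lemma mul_b (x y : Quad n u) :
    (x * y).b = x.a * y.b + x.b * y.a + u * x.b * y.b := rfl

instance : CommRing (Quad n u) where
  nsmul := nsmulRec
  zsmul := zsmulRec
  add_assoc x y z := by ext <;> simp <;> ring
  zero_add x := by ext <;> simp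
  add_zero x := by ext <;> simp
  add_comm x y := by ext <;> simp <;> ring
  neg_add_cancel x := by ext <;> simp
  left_distrib x y z := by ext <;> simp <;> ring
  right_distrib x y z := by ext <;> simp <;> ring
  zero_mul x := by ext <;> simp
  mul_zero x := by ext <;> simp
  mul_assoc x y z := by ext <;> simp <;> ring
  one_mul x := by ext <;> simp
  mul_one x := by ext <;> simp
  mul_comm x y := by ext <;> simp <;> ring

@[simp] lemma sub_a (x y : Quad n u) : (x - y).a = x.a - y.a := by
  rw [sub_eq_add_neg, sub_eq_add_neg]; simp
@[simp] lemma sub_b (x y : Quad n u) : (x - y).b = x.b - y.b := by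
  rw [sub_eq_add_neg, sub_eq_add_neg]; simp

/-- the embedding of `ZMod n`. -/
def emb : ZMod n →+* Quad n u where
  toFun c := ⟨c, 0⟩
  map_one' := rfl
  map_mul' x y := by ext <;> simp
  map_zero' := rfl
  map_add' x y := by ext <;> simp

@[simp] lemma emb_a (c : ZMod n) : (emb c : Quad n u).a = c := rfl
@[simp] lemma emb_b (c : ZMod n) : (emb c : Quad n u).b = 0 := rfl

lemma emb_injective : Function.Injective (emb : ZMod n →+* Quad n u) := by
  intro x y h
  simpa using congrArg Quad.a h

@[simp] lemma natCast_a (m : ℕ) : ((m : Quad n u)).a = (m : ZMod n) := by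
  rw [← map_natCast (emb (u := u)) m]; rfl
@[simp] lemma natCast_b (m : ℕ) : ((m : Quad n u)).b = 0 := by
  rw [← map_natCast (emb (u := u)) m]; rfl
@[simp] lemma ofNat_a (m : ℕ) [m.AtLeastTwo] :
    ((OfNat.ofNat m : Quad n u)).a = OfNat.ofNat m := by
  rw [← Nat.cast_ofNat, natCast_a, Nat.cast_ofNat]
@[simp] lemma ofNat_b (m : ℕ) [m.AtLeastTwo] :
    ((OfNat.ofNat m : Quad n u)).b = 0 := by
  rw [← Nat.cast_ofNat, natCast_b]

/-- the root `t`. -/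
def t : Quad n u := ⟨0, 1⟩

@[simp] lemma t_a : (t : Quad n u).a = 0 := rfl
@[simp] lemma t_b : (t : Quad n u).b = 1 := rfl

lemma t_sq : (t : Quad n u) * t = emb u * t - 1 := by ext <;> simp

lemma t_mul_inv : (t : Quad n u) * (emb u - t) = 1 := by ext <;> simp <;> ring

/-- functoriality -/
def qmap {n' : ℕ} {u' : ZMod n'} (f : ZMod n →+* ZMod n') (hu : f u = u') :
    Quad n u →+* Quad n' u' where
  toFun x := ⟨f x.a, f x.b⟩
  map_one' := by ext <;> simp
  map_mul' x y := by ext <;> simp [← hu] <;> ring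
  map_zero' := by ext <;> simp
  map_add' x y := by ext <;> simp

@[simp] lemma qmap_a {n' : ℕ} {u' : ZMod n'} (f : ZMod n →+* ZMod n') (hu : f u = u')
    (x : Quad n u) : (qmap f hu x).a = f x.a := rfl
@[simp] lemma qmap_b {n' : ℕ} {u' : ZMod n'} (f : ZMod n →+* ZMod n') (hu : f u = u')
    (x : Quad n u) : (qmap f hu x).b = f x.b := rfl

@[simp] lemma qmap_t {n' : ℕ} {u' : ZMod n'} (f : ZMod n →+* ZMod n') (hu : f u = u') :
    qmap f hu (t : Quad n u) = t := by ext <;> simp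

end Quad

/-! ## Generic commutative-ring lemmas -/

section Aux
variable {R : Type*} [CommRing R]

lemma three_pow_pow (s : R) (j : ℕ) :
    ∃ y : R, (1 + 3*s)^(3^j) = 1 + 3^(j+1)*(s + 3*y) := by
  induction j with
  | zero => exact ⟨0, by norm_num⟩
  | succ j ih =>
    obtain ⟨y, hy⟩ := ih
    refine ⟨y + 3^j*(s+3*y)^2 + 3^(2*j)*(s+3*y)^3, ?_⟩
    have h1 : (1 + 3*s)^(3^(j+1)) = ((1 + 3*s)^(3^j))^3 := by
      rw [pow_succ, pow_mul]
    rw [h1, hy]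
    ring

lemma one_add_pow' (x : R) (w : ℕ) : ∃ z : R, (1+x)^w = 1 + w*x + x^2*z := by
  induction w with
  | zero => exact ⟨0, by norm_num⟩
  | succ w ih =>
    obtain ⟨z, hz⟩ := ih
    refine ⟨z + w + x*z, ?_⟩
    rw [pow_succ, hz]
    push_cast
    ring

lemma key_identity (x y : R) (h : x * y = 1) (k : ℕ) (hk : 0 < k) :
    (x^k + y^k - (x+y)) * x^k = (x^(k-1) - 1) * (x^(k+1) - 1) := by
  obtain ⟨m, rfl⟩ : ∃ m, k = m + 1 := ⟨k - 1, by omega⟩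
  have h1 : y^(m+1) * x^(m+1) = 1 := by
    rw [← mul_pow, mul_comm, h, one_pow]
  have h2 : y * x^(m+1) = x^m := by
    rw [pow_succ, ← mul_assoc, mul_comm y, mul_assoc, mul_comm y, h, mul_one]
  simp only [Nat.add_sub_cancel]
  linear_combination h1 - h2

/-- the ramified-case induction. -/
lemma ram_pow (t ε m d : R) (hε : ε*ε = 1) (ht : t = ε + m) (hm : m*m = 3*(d*t)) (j : ℕ) :
    ∃ α β : R, t^(3^j) = ε + 3^j*(m*α + 3*β) := by
  induction j with
  | zero => exact ⟨1, 0, by simpa using ht⟩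
  | succ j ih =>
    obtain ⟨α, β, hαβ⟩ := ih
    set P : R := (3:R)^j with hP
    refine ⟨α + 6*ε*P*α*β + P^2*d*t*α^3 + 9*P^2*α*β^2,
            β + ε*P*d*t*α^2 + 3*ε*P*β^2 + 3*P^2*d*t*α^2*β + 3*P^2*β^3, ?_⟩
    have h1 : t^(3^(j+1)) = (t^(3^j))^3 := by rw [pow_succ, pow_mul]
    rw [h1, hαβ]
    have hP3 : (3:R)^(j+1) = 3*P := by rw [hP, pow_succ]; ring
    rw [hP3]
    linear_combination (3*ε*P^2*α^2 + m*P^3*α^3 + 9*P^3*α^2*β) * hm +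
      (ε + 3*m*P*α + 9*P*β) * hε

end Aux

/-! ## Facts about `Quad (3^e) u` -/

namespace Quad

variable {e : ℕ}

lemma three_pow_zero {u : ZMod (3^e)} : ((3 : Quad (3^e) u))^e = 0 := by
  have h1 : ((3^e : ℕ) : Quad (3^e) u) = 0 := by
    rw [← map_natCast (emb (u := u)), ZMod.natCast_self, map_zero]
  calc ((3:Quad (3^e) u))^e = ((3^e : ℕ) : Quad (3^e) u) := by push_cast; ring
  _ = 0 := h1

lemma hdvd3 (he : 1 ≤ e) : (3:ℕ) ∣ 3^e := dvd_pow_self 3 (by omega)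

lemma zmod_div3 (he : 1 ≤ e) (a : ZMod (3^e))
    (h : ZMod.castHom (hdvd3 he) (ZMod 3) a = 0) : ∃ b : ZMod (3^e), a = 3*b := by
  haveI : NeZero (3^e) := ⟨pow_ne_zero _ (by norm_num)⟩
  obtain ⟨a', rfl⟩ := ZMod.natCast_zmod_surjective a
  rw [map_natCast, ZMod.natCast_eq_zero_iff] at h
  obtain ⟨b, rfl⟩ := h
  exact ⟨b, by push_cast; ring⟩

/-- the ramified case of the key vanishing lemma. -/
lemma key_zero_ram (he : 1 ≤ e) (u ε₀ d₀ : ZMod (3^e))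
    (hε₀ : ε₀*ε₀ = 1) (hu : u = 2*ε₀ + 3*d₀) :
    ((t : Quad (3^e) u)^(4*3^(e-1)) - 1) * (t^2 - 1) = 0 := by
  have h3e : ((3 : Quad (3^e) u))^e = 0 := three_pow_zero
  have hts : (t : Quad (3^e) u)^2 = emb u * t - 1 := by rw [pow_two]; exact t_sq
  set ε : Quad (3^e) u := emb ε₀ with hεdef
  set d : Quad (3^e) u := emb d₀ with hddef
  set m : Quad (3^e) u := t - ε with hmdef
  have hembu := congrArg (fun x : ZMod (3^e) => (emb x : Quad (3^e) u)) hu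
  simp only [map_add, map_mul, map_ofNat] at hembu
  have hε : ε*ε = 1 := by rw [hεdef, ← map_mul, hε₀, map_one]
  have hm : m*m = 3*(d*t) := by
    rw [hmdef]
    linear_combination t_sq + t*hembu + hε
  have ht : t = ε + m := by rw [hmdef]; ring
  obtain ⟨α, β, hab⟩ := ram_pow t ε m d hε ht hm e
  have t3e : (t : Quad (3^e) u)^(3^e) = ε := by rw [hab, h3e]; ring
  obtain ⟨α', β', hN⟩ := ram_pow t ε m d hε ht hm (e-1)
  have hp : ((3 : Quad (3^e) u))^(e-1)*3 = 0 := by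
    rw [← pow_succ, show e-1+1 = e from by omega, h3e]
  have hmt : m * t^(3^(e-1)) = ε*m := by
    rw [hN]
    linear_combination ((3 : Quad (3^e) u)^(e-1)*α')*hm + (d*t*α' + m*β')*hp
  have t4N : (t : Quad (3^e) u)^(4*3^(e-1)) = ε * t^(3^(e-1)) := by
    have h3 : (3:ℕ)^e = 3*3^(e-1) := by
      conv_lhs => rw [show e = e-1+1 from by omega]
      rw [pow_succ]; ring
    have h34 : 4*3^(e-1) = 3^e + 3^(e-1) := by omega
    rw [h34, pow_add, t3e]
  have hm4 : m * t^(4*3^(e-1)) = m := by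
    rw [t4N]
    linear_combination ε*hmt + m*hε
  have hfac : (t : Quad (3^e) u)^2 - 1 = m*(m+2*ε) := by
    rw [hmdef]
    linear_combination hε
  rw [hfac]
  linear_combination (m+2*ε)*hm4

/-- The key vanishing lemma: `(t^(4·3^(e-1)) - 1)(t² - 1) = 0` in `Quad (3^e) u`. -/
lemma key_zero (he : 1 ≤ e) (u : ZMod (3^e)) :
    ((t : Quad (3^e) u)^(4*3^(e-1)) - 1) * (t^2 - 1) = 0 := by
  have h3e : ((3 : Quad (3^e) u))^e = 0 := three_pow_zero
  have hts : (t : Quad (3^e) u)^2 = emb u * t - 1 := by rw [pow_two]; exact t_sq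
  have hval : ∀ x : ZMod 3, x = 0 ∨ x = 1 ∨ x = 2 := by decide
  rcases hval (ZMod.castHom (hdvd3 he) (ZMod 3) u) with h0 | h1 | h2
  · -- inert case
    obtain ⟨u', hu'⟩ := zmod_div3 he u h0
    set w : Quad (3^e) u := emb u' with hw
    have hu3 : (emb u : Quad (3^e) u) = 3*w := by
      have h := congrArg (fun x : ZMod (3^e) => (emb x : Quad (3^e) u)) hu'
      simp only [map_mul, map_ofNat] at h
      rw [hw]; exact h
    have ht2 : (t : Quad (3^e) u)^2 = 3*w*t - 1 := by rw [hts, hu3]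
    set s : Quad (3^e) u := 9*w^3*t - 3*w^2 - 2*w*t with hs
    have t4 : (t : Quad (3^e) u)^4 = 1 + 3*s := by
      rw [hs]
      linear_combination (t^2 + 3*w*t + 9*w^2 - 1) * ht2
    obtain ⟨y, hy⟩ := three_pow_pow s (e-1)
    have he1 : e - 1 + 1 = e := by omega
    have h4N : (t : Quad (3^e) u)^(4*3^(e-1)) = 1 := by
      rw [pow_mul, t4, hy, he1, h3e]
      ring
    rw [h4N]
    ring
  · -- ramified case, u ≡ 1 mod 3
    have hc : ZMod.castHom (hdvd3 he) (ZMod 3) (u - 2*(-1)) = 0 := by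
      rw [map_sub, h1, map_mul, map_neg, map_one, map_ofNat]; decide
    obtain ⟨d₀, hd₀⟩ := zmod_div3 he (u - 2*(-1)) hc
    exact key_zero_ram he u (-1) d₀ (by ring) (by linear_combination hd₀)
  · -- ramified case, u ≡ 2 mod 3
    have hc : ZMod.castHom (hdvd3 he) (ZMod 3) (u - 2*1) = 0 := by
      rw [map_sub, h2, map_mul, map_one, map_ofNat]; decide
    obtain ⟨d₀, hd₀⟩ := zmod_div3 he (u - 2*1) hc
    exact key_zero_ram he u 1 d₀ (by ring) (by linear_combination hd₀)


/-- Dickson evaluation seen inside `Quad`. -/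
lemma emb_eval_dickson {u : ZMod n} (k : ℕ) :
    emb (Polynomial.eval u (dickson 1 1 k)) = (t : Quad n u)^k + (emb u - t)^k := by
  have h1 : emb (Polynomial.eval u (dickson 1 1 k))
      = Polynomial.eval (emb u : Quad n u) ((dickson 1 1 k).map emb) := by
    rw [eval_map, eval₂_at_apply]
  have h2 : (emb u : Quad n u) = t + (emb u - t) := by ring
  have h3 := dickson_one_one_eval_add_inv (t : Quad n u) (emb u - t) t_mul_inv k
  rw [← h2] at h3
  rw [h1, map_dickson, map_one, h3]

lemma dickson_eq_iff {u : ZMod n} (k : ℕ) (hk : 0 < k) :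
    Polynomial.eval u (dickson 1 1 k) = u ↔
      ((t : Quad n u)^(k-1) - 1) * (t^(k+1) - 1) = 0 := by
  have hU : IsUnit ((t : Quad n u)^k) :=
    (IsUnit.of_mul_eq_one _ t_mul_inv).pow k
  rw [← key_identity t (emb u - t) t_mul_inv k hk]
  rw [hU.mul_left_eq_zero]
  constructor
  · intro h
    rw [show (emb u : Quad n u) = emb u from rfl] at *
    have : emb (Polynomial.eval u (dickson 1 1 k)) = (emb u : Quad n u) := by
      rw [h]
    rw [emb_eval_dickson] at this
    linear_combination this
  · intro h
    apply emb_injective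
    rw [emb_eval_dickson]
    linear_combination h


lemma eval_eq_of_dvd (he : 1 ≤ e) (k : ℕ) (hk : 0 < k)
    (h : 4*3^(e-1) ∣ k - 1 ∨ 4*3^(e-1) ∣ k + 1) (u : ZMod (3^e)) :
    Polynomial.eval u (dickson 1 1 k) = u := by
  rw [dickson_eq_iff k hk]
  have key := key_zero he u
  rcases h with ⟨j, hj⟩ | ⟨j, hj⟩
  · have d1 : ((t : Quad (3^e) u)^(4*3^(e-1)) - 1) ∣ (t^(k-1) - 1) := by
      rw [hj]; exact pow_one_sub_dvd_pow_mul_sub_one t _ j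
    obtain ⟨h', hh'⟩ : ∃ h', k + 1 = 2*h' := by
      have hj2 : k - 1 = 2*(2*(3^(e-1)*j)) := by rw [hj]; ring
      exact ⟨2*(3^(e-1)*j)+1, by omega⟩
    have d2 : ((t : Quad (3^e) u)^2 - 1) ∣ (t^(k+1) - 1) := by
      rw [hh']; exact pow_one_sub_dvd_pow_mul_sub_one t 2 h'
    obtain ⟨c, hc⟩ := mul_dvd_mul d1 d2
    rw [hc, key, zero_mul]
  · have d1 : ((t : Quad (3^e) u)^(4*3^(e-1)) - 1) ∣ (t^(k+1) - 1) := by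
      rw [hj]; exact pow_one_sub_dvd_pow_mul_sub_one t _ j
    obtain ⟨h', hh'⟩ : ∃ h', k - 1 = 2*h' := by
      have hj2 : k + 1 = 2*(2*(3^(e-1)*j)) := by rw [hj]; ring
      exact ⟨2*(3^(e-1)*j)-1, by omega⟩
    have d2 : ((t : Quad (3^e) u)^2 - 1) ∣ (t^(k-1) - 1) := by
      rw [hh']; exact pow_one_sub_dvd_pow_mul_sub_one t 2 h'
    obtain ⟨c, hc⟩ := mul_dvd_mul d1 d2
    rw [mul_comm (t^(k-1) - 1), hc, key, zero_mul]

lemma isUnit_of_qmap (he : 1 ≤ e) {u : ZMod (3^e)} {u' : ZMod 3}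
    (hu : ZMod.castHom (hdvd3 he) (ZMod 3) u = u') (x : Quad (3^e) u)
    (hx : qmap (ZMod.castHom (hdvd3 he) (ZMod 3)) hu x = 1) : IsUnit x := by
  have hxa := congrArg Quad.a hx
  have hxb := congrArg Quad.b hx
  simp only [qmap_a, qmap_b, one_a, one_b] at hxa hxb
  have ha : ZMod.castHom (hdvd3 he) (ZMod 3) ((x - 1).a) = 0 := by
    rw [sub_a, one_a, map_sub, map_one, hxa, sub_self]
  have hb : ZMod.castHom (hdvd3 he) (ZMod 3) ((x - 1).b) = 0 := by
    rw [sub_b, one_b, map_sub, map_zero, hxb, sub_zero]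
  obtain ⟨ba, hba⟩ := zmod_div3 he _ ha
  obtain ⟨bb, hbb⟩ := zmod_div3 he _ hb
  rw [sub_a, one_a] at hba
  rw [sub_b, one_b, sub_zero] at hbb
  have h3 : (3 : Quad (3^e) u) = emb (3 : ZMod (3^e)) := (map_ofNat (emb (u := u)) 3).symm
  have hx1 : x = 1 + 3*(⟨ba, bb⟩ : Quad (3^e) u) := by
    rw [h3]
    ext
    · simp only [add_a, mul_a, emb_a, emb_b, one_a]
      linear_combination hba
    · simp only [add_b, mul_b, emb_a, emb_b, one_b]
      linear_combination hbb
  rw [hx1]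
  have hnil : IsNilpotent ((3:Quad (3^e) u)*(⟨ba, bb⟩ : Quad (3^e) u)) :=
    ⟨e, by rw [mul_pow, three_pow_zero, zero_mul]⟩
  exact hnil.isUnit_one_add


lemma cast3_eq_zero (he : 1 ≤ e) :
    ZMod.castHom (hdvd3 he) (ZMod 3) (3 : ZMod (3^e)) = (0 : ZMod 3) := by
  rw [map_ofNat]; decide

lemma tau_sq : (t : Quad 3 (0 : ZMod 3))^2 = -1 := by
  rw [pow_two]
  have h := t_sq (u := (0 : ZMod 3))
  rw [map_zero] at h
  rw [h]; ring

lemma neg_one_ne_one : (-1 : Quad 3 (0 : ZMod 3)) ≠ 1 := by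
  intro h
  have h2 := congrArg Quad.a h
  rw [neg_a, one_a] at h2
  exact absurd h2 (by decide)

lemma neg_two_eq_one : (-2 : Quad 3 (0 : ZMod 3)) = 1 := by
  have h30 : (3 : Quad 3 (0 : ZMod 3)) = 0 := by
    rw [← map_ofNat (emb (u := (0 : ZMod 3))) 3, show (3 : ZMod 3) = 0 from by decide, map_zero]
  linear_combination -h30

lemma order_dvd (he : 1 ≤ e) (M H : ℕ) (hM : M = 2*H)
    (h1 : (t : Quad (3^e) (3 : ZMod (3^e)))^M = 1) : 4*3^(e-1) ∣ M := by
  have hu30 := cast3_eq_zero he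
  set π := qmap (ZMod.castHom (hdvd3 he) (ZMod 3)) hu30 with hπdef
  have hπM : ((-1 : Quad 3 (0 : ZMod 3)))^H = 1 := by
    have h2 := congrArg π h1
    rw [map_pow, map_one, hπdef, qmap_t, hM, pow_mul, tau_sq] at h2
    exact h2
  obtain ⟨g, hg⟩ : ∃ g, H = 2*g := by
    rcases Nat.even_or_odd H with ⟨r, hr⟩ | ⟨r, hr⟩
    · exact ⟨r, by omega⟩
    · exfalso
      rw [hr, pow_succ, pow_mul, neg_one_sq, one_pow, one_mul] at hπM
      exact neg_one_ne_one hπM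
  have hts3 : (t : Quad (3^e) (3 : ZMod (3^e)))^2 = 3*t - 1 := by
    rw [pow_two]
    have h := t_sq (u := (3 : ZMod (3^e)))
    rw [map_ofNat] at h
    exact h
  have t4 : (t : Quad (3^e) (3 : ZMod (3^e)))^4 = 1 + 3*(7*t - 3) := by
    linear_combination (t^2 + 3*t + 8) * hts3
  have h3e : ((3 : Quad (3^e) (3 : ZMod (3^e))))^e = 0 := three_pow_zero
  have hg1 : ((1 + 3*(7*t-3)) : Quad (3^e) (3 : ZMod (3^e)))^g = 1 := by
    rw [← t4, ← pow_mul, show 4*g = M from by omega]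
    exact h1
  suffices hdq : 3^(e-1) ∣ g by
    obtain ⟨q, hq⟩ := hdq
    exact ⟨q, by rw [hM, hg, hq]; ring⟩
  by_cases hg0 : g = 0
  · rw [hg0]; exact dvd_zero _
  by_cases hj : e - 1 ≤ g.factorization 3
  · exact dvd_trans (pow_dvd_pow 3 hj) (Nat.ordProj_dvd g 3)
  push_neg at hj
  exfalso
  set j := g.factorization 3 with hjdef
  set w := g / 3^j with hwdef
  have hgw : 3^j * w = g := Nat.ordProj_mul_ordCompl_eq_self g 3
  have hw3 : ¬ (3 ∣ w) := Nat.not_dvd_ordCompl (by norm_num) hg0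
  obtain ⟨y, hy⟩ := three_pow_pow ((7*t - 3 : Quad (3^e) (3 : ZMod (3^e)))) j
  obtain ⟨z, hz⟩ :=
    one_add_pow' (((3 : Quad (3^e) (3 : ZMod (3^e))))^(j+1)*((7*t-3) + 3*y)) w
  have heq0 : (w : Quad (3^e) (3 : ZMod (3^e)))*((3 : Quad (3^e) (3 : ZMod (3^e)))^(j+1)*((7*t-3) + 3*y))
      + ((3 : Quad (3^e) (3 : ZMod (3^e)))^(j+1)*((7*t-3) + 3*y))^2*z = 0 := by
    have h2 : ((1 + 3*(7*t-3)) : Quad (3^e) (3 : ZMod (3^e)))^(3^j*w) = 1 := by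
      rw [hgw]; exact hg1
    rw [pow_mul, hy, hz] at h2
    linear_combination h2
  have p1 : (3 : Quad (3^e) (3 : ZMod (3^e)))^(e-2-j)*(3 : Quad (3^e) (3 : ZMod (3^e)))^(j+1)
      = (3 : Quad (3^e) (3 : ZMod (3^e)))^(e-1) := by
    rw [← pow_add, show e-2-j + (j+1) = e-1 from by omega]
  have p2 : (3 : Quad (3^e) (3 : ZMod (3^e)))^(e-2-j)*((3 : Quad (3^e) (3 : ZMod (3^e)))^(j+1))^2 = 0 := by
    rw [← pow_mul, ← pow_add, show e-2-j + (j+1)*2 = e + j from by omega, pow_add, h3e, zero_mul]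
  have hp : (3 : Quad (3^e) (3 : ZMod (3^e)))^(e-1)*3 = 0 := by
    rw [← pow_succ, show e-1+1 = e from by omega, h3e]
  have hkey : (3 : Quad (3^e) (3 : ZMod (3^e)))^(e-1) * ((w : Quad (3^e) (3 : ZMod (3^e)))*(7*t-3)) = 0 := by
    linear_combination (3 : Quad (3^e) (3 : ZMod (3^e)))^(e-2-j)*heq0
      - (w : Quad (3^e) (3 : ZMod (3^e)))*((7*t-3)+3*y)*p1
      - ((7*t-3)+3*y)^2*z*p2
      - (w : Quad (3^e) (3 : ZMod (3^e)))*y*hp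
  have hfin : emb ((3^(e-1)*w : ℕ) : ZMod (3^e)) * ((emb (7 : ZMod (3^e)))*t - emb (3 : ZMod (3^e)))
      = (0 : Quad (3^e) (3 : ZMod (3^e))) := by
    rw [map_natCast, map_ofNat, map_ofNat]
    push_cast
    linear_combination hkey
  have hb := congrArg Quad.b hfin
  simp only [mul_b, mul_a, sub_b, sub_a, emb_a, emb_b, t_a, t_b, zero_b,
    mul_zero, mul_one, zero_mul, add_zero, zero_add, sub_zero, zero_sub] at hb
  have hcast : ((3^(e-1)*w*7 : ℕ) : ZMod (3^e)) = 0 := by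
    push_cast
    push_cast at hb
    linear_combination hb
  rw [ZMod.natCast_eq_zero_iff] at hcast
  obtain ⟨q, hq⟩ := hcast
  have h3 : (3:ℕ)^e = 3^(e-1)*3 := by
    rw [← pow_succ, show e-1+1 = e from by omega]
  rw [h3] at hq
  have hq2 : 3^(e-1)*(w*7) = 3^(e-1)*(3*q) := by
    rw [← mul_assoc, ← mul_assoc]; exact hq
  have hq3 : w*7 = 3*q := Nat.eq_of_mul_eq_mul_left (Nat.pow_pos (by norm_num)) hq2
  have : (3:ℕ) ∣ w :=
    Nat.Coprime.dvd_of_dvd_mul_right (show Nat.Coprime 3 7 from by norm_num) ⟨q, hq3⟩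
  exact hw3 this

lemma forward (he : 1 ≤ e) (k : ℕ) (hk : 0 < k) (hodd : k % 2 = 1)
    (H : Polynomial.eval (3 : ZMod (3^e)) (dickson 1 1 k) = (3 : ZMod (3^e))) :
    4*3^(e-1) ∣ k - 1 ∨ 4*3^(e-1) ∣ k + 1 := by
  have h0 := (dickson_eq_iff (u := (3 : ZMod (3^e))) k hk).mp H
  have hu30 := cast3_eq_zero he
  set π := qmap (ZMod.castHom (hdvd3 he) (ZMod 3)) hu30 with hπdef
  obtain ⟨h, rfl⟩ : ∃ h, k = 2*h+1 := ⟨k/2, by omega⟩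
  have hπ1 : π (t^(2*h+1-1)) = (-1 : Quad 3 (0 : ZMod 3))^h := by
    rw [hπdef, map_pow, qmap_t, show 2*h+1-1 = 2*h from by omega, pow_mul, tau_sq]
  have hπ2 : π (t^(2*h+1+1)) = (-1 : Quad 3 (0 : ZMod 3))^(h+1) := by
    rw [hπdef, map_pow, qmap_t, show 2*h+1+1 = 2*(h+1) from by omega, pow_mul, tau_sq]
  rcases Nat.even_or_odd h with ⟨r, hr⟩ | ⟨r, hr⟩
  · left
    have hunit : IsUnit ((t : Quad (3^e) (3 : ZMod (3^e)))^(2*h+1+1) - 1) := by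
      apply isUnit_of_qmap he hu30
      rw [← hπdef, map_sub, map_one, hπ2, hr,
        show r+r+1 = 2*r+1 from by omega, pow_succ, pow_mul, neg_one_sq, one_pow, one_mul]
      linear_combination neg_two_eq_one
    have ht1 : (t : Quad (3^e) (3 : ZMod (3^e)))^(2*h+1-1) = 1 := by
      have h2 := (hunit.mul_left_eq_zero).mp h0
      linear_combination h2
    exact order_dvd he (2*h+1-1) h (by omega) ht1
  · right
    have hunit : IsUnit ((t : Quad (3^e) (3 : ZMod (3^e)))^(2*h+1-1) - 1) := by
      apply isUnit_of_qmap he hu30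
      rw [← hπdef, map_sub, map_one, hπ1, hr, pow_succ, pow_mul, neg_one_sq, one_pow, one_mul]
      linear_combination neg_two_eq_one
    rw [mul_comm] at h0
    have ht1 : (t : Quad (3^e) (3 : ZMod (3^e)))^(2*h+1+1) = 1 := by
      have h2 := (hunit.mul_left_eq_zero).mp h0
      linear_combination h2
    exact order_dvd he (2*h+1+1) (h+1) (by omega) ht1

end Quad

theorem dickson_identity_iff_three_pow (e : ℕ) (he : 1 ≤ e) (k : ℕ) (hk : 0 < k)
    (hgcd : Nat.gcd k (4 * 3 ^ (e - 1)) = 1) :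
    (∀ u : ZMod (3 ^ e), Polynomial.eval u (Polynomial.dickson 1 1 k) = u) ↔
      ((k : ℤ) ≡ 1 [ZMOD (4 * 3 ^ (e - 1) : ℕ)] ∨ (k : ℤ) ≡ -1 [ZMOD (4 * 3 ^ (e - 1) : ℕ)]) := by
  have hk1 : 1 ≤ k := hk
  have hodd : k % 2 = 1 := by
    rcases Nat.even_or_odd k with he2 | ho
    · exfalso
      have h2 : 2 ∣ Nat.gcd k (4*3^(e-1)) :=
        Nat.dvd_gcd he2.two_dvd ⟨2*3^(e-1), by ring⟩
      rw [hgcd] at h2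
      norm_num at h2
    · exact Nat.odd_iff.mp ho
  constructor
  · intro H
    rcases Quad.forward he k hk hodd (H 3) with h | h
    · left
      refine Int.modEq_iff_dvd.mpr ?_
      have h2 : ((4*3^(e-1) : ℕ) : ℤ) ∣ ((k:ℤ) - 1) := by
        have h3 := Int.natCast_dvd_natCast.mpr h
        rwa [Nat.cast_sub hk1, Nat.cast_one] at h3
      rw [show (1:ℤ) - (k:ℤ) = -((k:ℤ)-1) from by ring, dvd_neg]
      exact_mod_cast h2
    · right
      refine Int.modEq_iff_dvd.mpr ?_
      have h2 : ((4*3^(e-1) : ℕ) : ℤ) ∣ ((k:ℤ) + 1) := by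
        have h3 := Int.natCast_dvd_natCast.mpr h
        rwa [Nat.cast_add, Nat.cast_one] at h3
      rw [show (-1:ℤ) - (k:ℤ) = -((k:ℤ)+1) from by ring, dvd_neg]
      exact_mod_cast h2
  · intro H u
    apply Quad.eval_eq_of_dvd he k hk ?_ u
    rcases H with h | h
    · left
      have hd := Int.ModEq.dvd h
      have h2 : ((4*3^(e-1) : ℕ) : ℤ) ∣ ((k-1 : ℕ) : ℤ) := by
        rw [Nat.cast_sub hk1, Nat.cast_one,
          show (k:ℤ) - 1 = -(1 - (k:ℤ)) from by ring, dvd_neg]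
        exact_mod_cast hd
      exact_mod_cast h2
    · right
      have hd := Int.ModEq.dvd h
      have h2 : ((4*3^(e-1) : ℕ) : ℤ) ∣ ((k+1 : ℕ) : ℤ) := by
        rw [Nat.cast_add, Nat.cast_one,
          show (k:ℤ) + 1 = -((-1:ℤ) - (k:ℤ)) from by ring, dvd_neg]
        exact_mod_cast hd
      exact_mod_cast h2
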